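/- Every bounded derivative is Lebesgue integrable and its indefinite Lebesgue integral recovers the primitive: if F is differentiable on [a,b] with F' bounded, then F' is Lebesgue integrable on [a,b] and ∫ₐˣ F' dμ = F(x) − F(a) for all x in [a,b]. -/
import Mathlib

open Set MeasureTheory intervalIntegral

/-- Every bounded derivative is Lebesgue integrable and the indefinite Lebesgue
integral recovers the primitive. -/
theorem bounded_derivative_lebesgue (a b : ℝ) (hab : a ≤ b) (F f : ℝ → ℝ)
    (hF : ∀ x ∈ Icc a b, HasDerivWithinAt F (f x) (Icc a b) x)
    (hbd : ∃ M : ℝ, ∀ x ∈ Icc a b, |f x| ≤ M) :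
    IntegrableOn f (Icc a b) volume ∧
    ∀ x ∈ Icc a b, ∫ t in a..x, f t = F x - F a := by
  obtain ⟨M, hM⟩ := hbd
  set g : ℝ → ℝ := fun x => derivWithin F (Ici x) x with hg
  have hgmeas : Measurable g := measurable_derivWithin_Ici F
  have h1 : ∀ x ∈ Ico a b, g x = f x := by
    intro x hx
    have hderiv : HasDerivWithinAt F (f x) (Ici x) x :=
      (hF x ⟨hx.1, hx.2.le⟩).mono_of_mem_nhdsWithin (Icc_mem_nhdsGE_of_mem hx)
    exact hderiv.derivWithin (uniqueDiffOn_Ici x x Set.self_mem_Ici)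
  have hrestrict : volume.restrict (Icc a b) = volume.restrict (Ico a b) :=
    (Measure.restrict_congr_set Ico_ae_eq_Icc).symm
  have hfg : f =ᵐ[volume.restrict (Icc a b)] g := by
    rw [hrestrict]
    filter_upwards [ae_restrict_mem measurableSet_Ico] with x hx
    exact (h1 x hx).symm
  have haemeas : AEStronglyMeasurable f (volume.restrict (Icc a b)) :=
    hgmeas.aestronglyMeasurable.congr hfg.symm
  have hint : IntegrableOn f (Icc a b) volume := by
    refine ⟨haemeas, HasFiniteIntegral.restrict_of_bounded (C := M)
      (measure_Icc_lt_top) ?_⟩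
    filter_upwards [ae_restrict_mem measurableSet_Icc] with x hx
    simpa using hM x hx
  refine ⟨hint, fun x hx => ?_⟩
  have hcont : ContinuousOn F (Icc a b) := fun y hy => (hF y hy).continuousWithinAt
  apply integral_eq_sub_of_hasDeriv_right_of_le hx.1
    (hcont.mono (Icc_subset_Icc le_rfl hx.2))
  · intro y hy
    have hyb : y < b := lt_of_lt_of_le hy.2 hx.2
    refine (hF y ⟨hy.1.le, hyb.le⟩).mono_of_mem_nhdsWithin ?_
    exact Filter.mem_of_superset (Ioc_mem_nhdsGT_of_mem ⟨le_rfl, hyb⟩)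
      (fun z hz => ⟨hy.1.le.trans hz.1.le, hz.2⟩)
  · rw [intervalIntegrable_iff_integrableOn_Icc_of_le hx.1]
    exact hint.mono_set (Icc_subset_Icc le_rfl hx.2)
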